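/- Consider the real Lie algebra 𝔤 of 2×2 matrix-valued polynomial functions of a real variable x generated by i·x·σ_z, i·σ_x, and i·σ_y (under pointwise commutator). Then for every k ∈ ℕ, 𝔤 contains i·x^k·σ_x, i·x^k·σ_y, and i·x^k·σ_z. -/

import Mathlib

open Matrix

attribute [local instance 100] LieRing.ofAssociativeRing

noncomputable def sigmaX : Matrix (Fin 2) (Fin 2) ℂ := !![0, 1; 1, 0]
noncomputable def sigmaY : Matrix (Fin 2) (Fin 2) ℂ := !![0, -Complex.I; Complex.I, 0]
noncomputable def sigmaZ : Matrix (Fin 2) (Fin 2) ℂ := !![1, 0; 0, -1]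

private lemma funeq_B (k : ℕ) : (fun x : ℝ => (x:ℂ)^(k+1) • (Complex.I • sigmaY)) =
    (-(1/2) : ℝ) • ⁅(fun x : ℝ => (x:ℂ) • (Complex.I • sigmaZ)),
      (fun x : ℝ => (x:ℂ)^k • (Complex.I • sigmaX))⁆ := by
  funext x; ext i j
  fin_cases i <;> fin_cases j <;>
    simp [Ring.lie_def, sigmaX, sigmaY, sigmaZ, Matrix.mul_apply, Fin.sum_univ_two,
      Complex.ext_iff, pow_succ] <;>
    ((try constructor) <;> ring)

private lemma funeq_A (k : ℕ) : (fun x : ℝ => (x:ℂ)^(k+1) • (Complex.I • sigmaX)) =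
    ((1/2) : ℝ) • ⁅(fun x : ℝ => (x:ℂ) • (Complex.I • sigmaZ)),
      (fun x : ℝ => (x:ℂ)^k • (Complex.I • sigmaY))⁆ := by
  funext x; ext i j
  fin_cases i <;> fin_cases j <;>
    simp [Ring.lie_def, sigmaX, sigmaY, sigmaZ, Matrix.mul_apply, Fin.sum_univ_two,
      Complex.ext_iff, pow_succ] <;>
    ((try constructor) <;> ring)

private lemma funeq_C (k : ℕ) : (fun x : ℝ => (x:ℂ)^k • (Complex.I • sigmaZ)) =
    (-(1/2) : ℝ) • ⁅(fun _ : ℝ => Complex.I • sigmaX),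
      (fun x : ℝ => (x:ℂ)^k • (Complex.I • sigmaY))⁆ := by
  funext x; ext i j
  fin_cases i <;> fin_cases j <;>
    simp [Ring.lie_def, sigmaX, sigmaY, sigmaZ, Matrix.mul_apply, Fin.sum_univ_two,
      Complex.ext_iff] <;>
    ((try constructor) <;> ring)

/-- In the real Lie algebra of matrix-valued functions of `x` generated by
`i x σz`, `i σx` and `i σy` (pointwise commutator), every `i x^k σx`, `i x^k σy`,
`i x^k σz` is contained. -/
theorem lieSpan_contains_monomials :
    ∀ k : ℕ,
      (fun x : ℝ => (x : ℂ) ^ k • (Complex.I • sigmaX)) ∈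
        LieSubalgebra.lieSpan ℝ (ℝ → Matrix (Fin 2) (Fin 2) ℂ)
          {fun x : ℝ => (x : ℂ) • (Complex.I • sigmaZ),
           fun _ : ℝ => Complex.I • sigmaX, fun _ : ℝ => Complex.I • sigmaY} ∧
      (fun x : ℝ => (x : ℂ) ^ k • (Complex.I • sigmaY)) ∈
        LieSubalgebra.lieSpan ℝ (ℝ → Matrix (Fin 2) (Fin 2) ℂ)
          {fun x : ℝ => (x : ℂ) • (Complex.I • sigmaZ),
           fun _ : ℝ => Complex.I • sigmaX, fun _ : ℝ => Complex.I • sigmaY} ∧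
      (fun x : ℝ => (x : ℂ) ^ k • (Complex.I • sigmaZ)) ∈
        LieSubalgebra.lieSpan ℝ (ℝ → Matrix (Fin 2) (Fin 2) ℂ)
          {fun x : ℝ => (x : ℂ) • (Complex.I • sigmaZ),
           fun _ : ℝ => Complex.I • sigmaX, fun _ : ℝ => Complex.I • sigmaY} := by
  set S : Set (ℝ → Matrix (Fin 2) (Fin 2) ℂ) :=
    {fun x : ℝ => (x : ℂ) • (Complex.I • sigmaZ),
     fun _ : ℝ => Complex.I • sigmaX, fun _ : ℝ => Complex.I • sigmaY} with hS
  set K := LieSubalgebra.lieSpan ℝ (ℝ → Matrix (Fin 2) (Fin 2) ℂ) S with hK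
  have hC1 : (fun x : ℝ => (x : ℂ) • (Complex.I • sigmaZ)) ∈ K :=
    LieSubalgebra.subset_lieSpan (by simp [hS])
  have hA0 : (fun _ : ℝ => Complex.I • sigmaX) ∈ K :=
    LieSubalgebra.subset_lieSpan (by simp [hS])
  have hB0 : (fun _ : ℝ => Complex.I • sigmaY) ∈ K :=
    LieSubalgebra.subset_lieSpan (by simp [hS])
  intro k
  induction k with
  | zero =>
    refine ⟨?_, ?_, ?_⟩
    · simpa using hA0
    · simpa using hB0
    · rw [funeq_C 0]
      exact K.smul_mem _ (K.lie_mem hA0 (by simpa using hB0))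
  | succ n ih =>
    obtain ⟨hA, hB, _⟩ := ih
    have hA' : (fun x : ℝ => (x : ℂ) ^ (n+1) • (Complex.I • sigmaX)) ∈ K := by
      rw [funeq_A n]; exact K.smul_mem _ (K.lie_mem hC1 hB)
    have hB' : (fun x : ℝ => (x : ℂ) ^ (n+1) • (Complex.I • sigmaY)) ∈ K := by
      rw [funeq_B n]; exact K.smul_mem _ (K.lie_mem hC1 hA)
    have hC' : (fun x : ℝ => (x : ℂ) ^ (n+1) • (Complex.I • sigmaZ)) ∈ K := by
      rw [funeq_C (n+1)]; exact K.smul_mem _ (K.lie_mem hA0 hB')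
    exact ⟨hA', hB', hC'⟩
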